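/- (T_•, ∗̂) is a free associative ℤ-algebra, freely generated by the set of reduced set compositions; equivalently, the symmetrized products P^{(1)} ∗̂ ⋯ ∗̂ P^{(m)} taken over all finite sequences (P^{(1)},…,P^{(m)}) of reduced set compositions form a ℤ-basis of T_•. -/

import Mathlib

set_option linter.unreachableTactic false
set_option linter.unusedTactic false
set_option maxHeartbeats 1000000


open Finset

/-- Candidate set compositions: lists of finite sets of positive naturals. -/
abbrev SC : Type := List (Finset ℕ)

/-- The underlying (ground) set of a list of blocks. -/
def ground (L : SC) : Finset ℕ := L.foldr (· ∪ ·) ∅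

/-- `L` is a set composition of `[n] = {1,…,n}`. -/
def IsSetComp (n : ℕ) (L : SC) : Prop :=
  (∀ B ∈ L, B.Nonempty) ∧ L.Pairwise Disjoint ∧ ground L = Finset.Icc 1 n

/-- The degree of a set composition (largest element of its ground set). -/
def maxG (L : SC) : ℕ := (ground L).sup id

/-- The 1-based rank of `x` inside the finite set `A` (the position of `x` in the
increasing enumeration of `A`, when `x ∈ A`); this is the order preserving
relabelling `A → [|A|]`. -/
def rankIn (A : Finset ℕ) (x : ℕ) : ℕ := (A.filter (· ≤ x)).card

/-- `P|_A` : intersect the blocks with `A`, delete the empty intersections, and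
relabel along the order preserving bijection `A → [|A|]`. -/
def restrictSC (A : Finset ℕ) (L : SC) : SC :=
  (L.map fun B => (B ∩ A).image (rankIn A)).filter fun B => decide B.Nonempty

/-- Shift all entries of all blocks by `p`. -/
def shiftSC (p : ℕ) (L : SC) : SC := L.map (Finset.image (· + p))

/-- The restricted product `∗̄` on set compositions:
`P ∗̄ Q = (P₁,…,P_k, p+Q₁,…,p+Q_l)` for `P ∈ Comp_p`. -/
def barMul (P Q : SC) : SC := P ++ shiftSC (maxG P) Q

/-- The order-preserving relabelling map `S → T` (`is_{S,T}`), for finite sets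
of equal cardinality. -/
def relabelFun (S T : Finset ℕ) (x : ℕ) : ℕ := (T.sort (· ≤ ·)).getD (rankIn S x - 1) 0

/-- Relabel a set composition of `S` along the order-preserving bijection `S → T`. -/
def relabelSC (S T : Finset ℕ) (L : SC) : SC := L.map (Finset.image (relabelFun S T))

variable (R : Type) [CommRing R]

/-- The free module with basis indexed by lists of blocks; the twisted descent
algebra `T_•` is its submodule spanned by the set compositions. -/
abbrev FM := SC →₀ R

/-- `T_•` as a submodule: the span of the set compositions. -/
noncomputable def Tspan : Submodule R (FM R) :=
  Submodule.span R {f : FM R | ∃ n P, IsSetComp n P ∧ f = Finsupp.single P 1}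

/-- The restricted product `∗̄` as a bilinear map. -/
noncomputable def barL : FM R →ₗ[R] FM R →ₗ[R] FM R :=
  Finsupp.lift _ R SC fun P => Finsupp.lift _ R SC fun Q => Finsupp.single (barMul P Q) 1

/-- The symmetrized product `∗̂` on basis elements:
`P ∗̂ Q = Σ is_{[p],A}(P) ∗ is_{[q],B}(Q)` over all `A ⊔ B = [p+q]`, `|A| = p`. -/
noncomputable def hatB (P Q : SC) : FM R :=
  ∑ A ∈ (Finset.Icc 1 (maxG P + maxG Q)).powerset.filter (fun A => A.card = maxG P),
    Finsupp.single
      (relabelSC (Finset.Icc 1 (maxG P)) A P ++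
        relabelSC (Finset.Icc 1 (maxG Q)) ((Finset.Icc 1 (maxG P + maxG Q)) \ A) Q) 1

/-- The symmetrized product `∗̂` as a bilinear map. -/
noncomputable def hatL : FM R →ₗ[R] FM R →ₗ[R] FM R :=
  Finsupp.lift _ R SC fun P => Finsupp.lift _ R SC fun Q => hatB R P Q

/-- `T_• ⊗ T_•`, realized as the free module on pairs of basis elements. -/
abbrev FM2 := (SC × SC) →₀ R

/-- `T_• ⊗ T_• ⊗ T_•`, realized as the free module on triples of basis elements. -/
abbrev FM3 := (SC × SC × SC) →₀ R

/-- The restricted coproduct `δ̄ (P) = Σ_{p=0}^n P|_{[p]} ⊗ P|_{{p+1,…,n}}`. -/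
noncomputable def dBarL : FM R →ₗ[R] FM2 R :=
  Finsupp.lift _ R SC fun P =>
    ∑ p ∈ Finset.range (maxG P + 1),
      Finsupp.single
        (restrictSC (Finset.Icc 1 p) P, restrictSC (Finset.Icc (p+1) (maxG P)) P) 1

/-- The cosymmetrized coproduct `δ̂ (P) = Σ_{A ⊔ B = [n]} P|_A ⊗ P|_B`. -/
noncomputable def dHatL : FM R →ₗ[R] FM2 R :=
  Finsupp.lift _ R SC fun P =>
    ∑ A ∈ (Finset.Icc 1 (maxG P)).powerset,
      Finsupp.single (restrictSC A P, restrictSC ((Finset.Icc 1 (maxG P)) \ A) P) 1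

/-- Apply a coproduct to the first tensor factor:  `d ⊗ id : T⊗T → T⊗T⊗T`. -/
noncomputable def applyFst (d : FM R →ₗ[R] FM2 R) : FM2 R →ₗ[R] FM3 R :=
  Finsupp.lift _ R (SC × SC) fun PQ =>
    Finsupp.mapDomain (fun RS : SC × SC => (RS.1, RS.2, PQ.2)) (d (Finsupp.single PQ.1 1))

/-- Apply a coproduct to the second tensor factor:  `id ⊗ d : T⊗T → T⊗T⊗T`. -/
noncomputable def applySnd (d : FM R →ₗ[R] FM2 R) : FM2 R →ₗ[R] FM3 R :=
  Finsupp.lift _ R (SC × SC) fun PQ =>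
    Finsupp.mapDomain (fun RS : SC × SC => (PQ.1, RS.1, RS.2)) (d (Finsupp.single PQ.2 1))

/-- `ε ⊗ id : T⊗T → T`, where `ε` is the projection onto `T_0 ≅ R`
(the coefficient of the empty set composition). -/
noncomputable def epsFst : FM2 R →ₗ[R] FM R :=
  Finsupp.lift _ R (SC × SC) fun PQ =>
    if PQ.1 = ([] : SC) then Finsupp.single PQ.2 1 else 0

/-- `id ⊗ ε : T⊗T → T`. -/
noncomputable def epsSnd : FM2 R →ₗ[R] FM R :=
  Finsupp.lift _ R (SC × SC) fun PQ =>
    if PQ.2 = ([] : SC) then Finsupp.single PQ.1 1 else 0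

/-- The twist map `x ⊗ y ↦ y ⊗ x` on `T_• ⊗ T_•`. -/
noncomputable def twistL : FM2 R →ₗ[R] FM2 R :=
  Finsupp.lift _ R (SC × SC) fun PQ => Finsupp.single (PQ.2, PQ.1) 1

/-- The counit: projection onto the degree-0 component `T_0 ≅ R`. -/
noncomputable def counitL : FM R →ₗ[R] R :=
  Finsupp.lift _ R SC fun P => if P = ([] : SC) then 1 else 0

/-- A set composition `(P₁,…,P_k)` of `[n]` is reduced if it is non-trivial and
there is no pair `(a, m)` with `1 ≤ a < k` and `m < n` such that
`P₁ ∪ ⋯ ∪ P_a = [m]`. -/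
def Reduced (n : ℕ) (P : SC) : Prop :=
  IsSetComp n P ∧ 0 < n ∧
    ∀ a m, 0 < a → a < P.length → m < n → ground (P.take a) ≠ Finset.Icc 1 m

/-- Finite sequences of reduced set compositions. -/
abbrev RedSeq := {F : List SC // ∀ Q ∈ F, ∃ m, Reduced m Q}

/-- The symmetrized product `P⁽¹⁾ ∗̂ ⋯ ∗̂ P⁽ᵐ⁾` of a finite sequence of set
compositions (the empty product being the empty set composition). -/
noncomputable def hatProdList (F : List SC) : FM ℤ :=
  F.foldr (fun P acc => hatL ℤ (Finsupp.single P 1) acc) (Finsupp.single ([] : SC) 1)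
-- Stage A: ground / sort / enum / rank basics
section Basics

lemma mem_ground {L : SC} {x : ℕ} : x ∈ ground L ↔ ∃ B ∈ L, x ∈ B := by
  induction L with
  | nil => simp [ground]
  | cons B L ih =>
    simp only [ground, List.foldr_cons, Finset.mem_union, List.mem_cons]
    rw [show L.foldr (· ∪ ·) ∅ = ground L from rfl] at *
    constructor
    · rintro (h | h)
      · exact ⟨B, Or.inl rfl, h⟩
      · obtain ⟨C, hC, hx⟩ := ih.mp h; exact ⟨C, Or.inr hC, hx⟩
    · rintro ⟨C, (rfl | hC), hx⟩
      · exact Or.inl hx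
      · exact Or.inr (ih.mpr ⟨C, hC, hx⟩)

lemma ground_cons (B : Finset ℕ) (L : SC) : ground (B :: L) = B ∪ ground L := rfl

lemma ground_append (L1 L2 : SC) : ground (L1 ++ L2) = ground L1 ∪ ground L2 := by
  induction L1 with
  | nil => simp [ground]
  | cons B L ih => simp [ground_cons, ih, Finset.union_assoc]

lemma ground_map_image (f : ℕ → ℕ) (L : SC) :
    ground (L.map (Finset.image f)) = (ground L).image f := by
  induction L with
  | nil => simp [ground]
  | cons B L ih => simp [ground_cons, ih, Finset.image_union]

lemma block_subset_ground {L : SC} {B : Finset ℕ} (h : B ∈ L) : B ⊆ ground L := by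
  intro x hx; exact mem_ground.mpr ⟨B, h, hx⟩

lemma disjoint_ground_of_forall {B : Finset ℕ} {L : SC}
    (h : ∀ C ∈ L, Disjoint B C) : Disjoint B (ground L) := by
  rw [Finset.disjoint_left]
  intro x hx hg
  obtain ⟨C, hC, hxC⟩ := mem_ground.mp hg
  exact (Finset.disjoint_left.mp (h C hC)) hx hxC

lemma disjoint_ground_ground {L1 L2 : SC}
    (h : ∀ B ∈ L1, ∀ C ∈ L2, Disjoint B C) : Disjoint (ground L1) (ground L2) := by
  rw [Finset.disjoint_left]
  intro x hx hg
  obtain ⟨B, hB, hxB⟩ := mem_ground.mp hx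
  obtain ⟨C, hC, hxC⟩ := mem_ground.mp hg
  exact (Finset.disjoint_left.mp (h B hB C hC)) hxB hxC

lemma maxG_of_isSetComp {n : ℕ} {L : SC} (h : IsSetComp n L) : maxG L = n := by
  rw [maxG, h.2.2]
  rcases Nat.eq_zero_or_pos n with rfl | hn
  · simp
  · apply le_antisymm
    · exact Finset.sup_le fun x hx => (Finset.mem_Icc.mp hx).2
    · exact Finset.le_sup (f := id) (Finset.mem_Icc.mpr ⟨hn, le_refl n⟩)

lemma isSetComp_zero {L : SC} (h : IsSetComp 0 L) : L = [] := by
  cases L with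
  | nil => rfl
  | cons B L =>
    exfalso
    have hB : B.Nonempty := h.1 B (List.mem_cons_self)
    obtain ⟨x, hx⟩ := hB
    have : x ∈ ground (B :: L) := mem_ground.mpr ⟨B, List.mem_cons_self, hx⟩
    rw [h.2.2] at this
    simp at this

lemma isSetComp_nil : IsSetComp 0 ([] : SC) := by
  refine ⟨by simp, by simp, ?_⟩; simp [ground]

-- sort of an interval
lemma sort_Icc (a n : ℕ) (ha : 1 ≤ a) : (Finset.Icc a (a + n - 1)).sort (· ≤ ·) = List.range' a n := by
  apply List.Perm.eq_of_pairwise' (r := (· ≤ ·))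
  rotate_right
  · apply List.perm_of_nodup_nodup_toFinset_eq
    · exact (Finset.Icc a (a + n - 1)).sort_nodup _
    · exact List.nodup_range'
    · ext x
      simp only [List.mem_toFinset, Finset.mem_sort, Finset.mem_Icc, List.mem_range'_1]
      omega
  · exact (Finset.Icc a (a + n - 1)).pairwise_sort _
  · exact (List.pairwise_lt_range' (s := a) (n := n)).imp le_of_lt

-- enumeration of a finset via sort
lemma enum_mem {T : Finset ℕ} {i : ℕ} (h : i < T.card) : (T.sort (· ≤ ·)).getD i 0 ∈ T := by
  have hl : i < (T.sort (· ≤ ·)).length := by rwa [Finset.length_sort]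
  rw [List.getD_eq_getElem _ _ hl]
  exact (Finset.mem_sort _).mp (List.getElem_mem hl)

lemma enum_lt_enum {T : Finset ℕ} {i j : ℕ} (hij : i < j) (hj : j < T.card) :
    (T.sort (· ≤ ·)).getD i 0 < (T.sort (· ≤ ·)).getD j 0 := by
  have hlj : j < (T.sort (· ≤ ·)).length := by rwa [Finset.length_sort]
  have hli : i < (T.sort (· ≤ ·)).length := lt_trans (by omega) hlj
  rw [List.getD_eq_getElem _ _ hli, List.getD_eq_getElem _ _ hlj]
  exact List.Pairwise.rel_get_of_lt (Finset.sortedLT_sort T).pairwise (a := ⟨i, hli⟩) (b := ⟨j, hlj⟩) hij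

lemma rankIn_Icc {p x : ℕ} (hx : x ∈ Finset.Icc 1 p) : rankIn (Finset.Icc 1 p) x = x := by
  rw [Finset.mem_Icc] at hx
  rw [rankIn]
  have : (Finset.Icc 1 p).filter (· ≤ x) = Finset.Icc 1 x := by
    ext y; simp only [Finset.mem_filter, Finset.mem_Icc]; omega
  rw [this, Nat.card_Icc]; omega

lemma relabelFun_Icc {p x : ℕ} (T : Finset ℕ) (hx : x ∈ Finset.Icc 1 p) :
    relabelFun (Finset.Icc 1 p) T x = (T.sort (· ≤ ·)).getD (x - 1) 0 := by
  rw [relabelFun, rankIn_Icc hx]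

lemma relabelFun_mem {p x : ℕ} {T : Finset ℕ} (hx : x ∈ Finset.Icc 1 p) (hT : T.card = p) :
    relabelFun (Finset.Icc 1 p) T x ∈ T := by
  rw [relabelFun_Icc T hx]
  apply enum_mem
  rw [Finset.mem_Icc] at hx; omega

lemma relabelFun_strictMono {p x y : ℕ} {T : Finset ℕ} (hx : x ∈ Finset.Icc 1 p)
    (hy : y ∈ Finset.Icc 1 p) (hT : T.card = p) (hxy : x < y) :
    relabelFun (Finset.Icc 1 p) T x < relabelFun (Finset.Icc 1 p) T y := by
  rw [relabelFun_Icc T hx, relabelFun_Icc T hy]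
  rw [Finset.mem_Icc] at hx hy
  exact enum_lt_enum (by omega) (by omega)

lemma relabelFun_injOn {p : ℕ} {T : Finset ℕ} (hT : T.card = p) :
    Set.InjOn (relabelFun (Finset.Icc 1 p) T) (Finset.Icc 1 p) := by
  intro x hx y hy hxy
  by_contra hne
  rcases Nat.lt_or_ge x y with h | h
  · exact absurd hxy (Nat.ne_of_lt (relabelFun_strictMono hx hy hT h))
  · have h' : y < x := by omega
    exact absurd hxy.symm (Nat.ne_of_lt (relabelFun_strictMono hy hx hT h'))

lemma relabelFun_image {p : ℕ} {T : Finset ℕ} (hT : T.card = p) :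
    (Finset.Icc 1 p).image (relabelFun (Finset.Icc 1 p) T) = T := by
  apply Finset.eq_of_subset_of_card_le
  · intro y hy
    obtain ⟨x, hx, rfl⟩ := Finset.mem_image.mp hy
    exact relabelFun_mem hx hT
  · rw [Finset.card_image_of_injOn (by exact_mod_cast relabelFun_injOn hT)]
    rw [Nat.card_Icc]; omega

lemma relabelFun_self {p x : ℕ} (hx : x ∈ Finset.Icc 1 p) :
    relabelFun (Finset.Icc 1 p) (Finset.Icc 1 p) x = x := by
  rw [relabelFun_Icc _ hx]
  rw [Finset.mem_Icc] at hx
  have hp : Finset.Icc 1 p = Finset.Icc 1 (1 + p - 1) := by congr 1; omega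
  rw [hp, sort_Icc 1 p le_rfl]
  have hl : x - 1 < (List.range' 1 p).length := by rw [List.length_range']; omega
  rw [List.getD_eq_getElem _ _ hl, List.getElem_range']
  omega

lemma relabelFun_shift {q p x : ℕ} (hx : x ∈ Finset.Icc 1 q) :
    relabelFun (Finset.Icc 1 q) (Finset.Icc (p+1) (p+q)) x = x + p := by
  rw [relabelFun_Icc _ hx]
  rw [Finset.mem_Icc] at hx
  have hp : Finset.Icc (p+1) (p+q) = Finset.Icc (p+1) (p+1 + q - 1) := by congr 1; omega
  rw [hp, sort_Icc (p+1) q (by omega)]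
  have hl : x - 1 < (List.range' (p+1) q).length := by rw [List.length_range']; omega
  rw [List.getD_eq_getElem _ _ hl, List.getElem_range']
  omega

end Basics

-- Stage B: the inversion statistic
section Stat

/-- number of inverted pairs (x,y) with x ∈ B, y ∈ C, y < x -/
def crossStat (B C : Finset ℕ) : ℕ := ((B ×ˢ C).filter fun p => p.2 < p.1).card

def stat : SC → ℕ
  | [] => 0
  | B :: L => crossStat B (ground L) + stat L

lemma crossStat_union_right {B C D : Finset ℕ} (h : Disjoint C D) :
    crossStat B (C ∪ D) = crossStat B C + crossStat B D := by
  rw [crossStat, crossStat, crossStat, Finset.product_union, Finset.filter_union]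
  apply Finset.card_union_of_disjoint
  apply Finset.disjoint_filter_filter
  rw [Finset.disjoint_left]
  intro ⟨x, y⟩ hxy h2
  simp only [Finset.mem_product] at hxy h2
  exact (Finset.disjoint_left.mp h) hxy.2 h2.2

lemma crossStat_union_left {B C D : Finset ℕ} (h : Disjoint B C) :
    crossStat (B ∪ C) D = crossStat B D + crossStat C D := by
  rw [crossStat, crossStat, crossStat, Finset.union_product, Finset.filter_union]
  apply Finset.card_union_of_disjoint
  apply Finset.disjoint_filter_filter
  rw [Finset.disjoint_left]
  intro ⟨x, y⟩ hxy h2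
  simp only [Finset.mem_product] at hxy h2
  exact (Finset.disjoint_left.mp h) hxy.1 h2.1

lemma crossStat_eq_zero {B C : Finset ℕ} (h : ∀ x ∈ B, ∀ y ∈ C, x < y) :
    crossStat B C = 0 := by
  rw [crossStat, Finset.card_eq_zero, Finset.filter_eq_empty_iff]
  intro ⟨x, y⟩ hxy
  simp only [Finset.mem_product] at hxy
  simp only [not_lt]
  exact le_of_lt (h x hxy.1 y hxy.2)

lemma crossStat_pos {B C : Finset ℕ} {x y : ℕ} (hx : x ∈ B) (hy : y ∈ C) (h : y < x) :
    0 < crossStat B C := by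
  rw [crossStat, Finset.card_pos]
  exact ⟨(x, y), Finset.mem_filter.mpr ⟨Finset.mem_product.mpr ⟨hx, hy⟩, h⟩⟩

lemma crossStat_le {B C : Finset ℕ} : crossStat B C ≤ B.card * C.card := by
  calc crossStat B C ≤ (B ×ˢ C).card := Finset.card_filter_le _ _
  _ = B.card * C.card := Finset.card_product B C

/-- crossStat is invariant under strictly monotone relabelling -/
lemma crossStat_image {f : ℕ → ℕ} {S B C : Finset ℕ} (hB : B ⊆ S) (hC : C ⊆ S)
    (hmono : ∀ x ∈ S, ∀ y ∈ S, x < y → f x < f y) :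
    crossStat (B.image f) (C.image f) = crossStat B C := by
  have key : ∀ x ∈ S, ∀ y ∈ S, (f y < f x ↔ y < x) := by
    intro x hx y hy
    constructor
    · intro h
      by_contra hn
      rcases Nat.lt_or_ge y x with h2 | h2
      · exact hn h2
      · rcases Nat.eq_or_lt_of_le h2 with rfl | h3
        · omega
        · exact absurd h (not_lt.mpr (le_of_lt (hmono x hx y hy h3)))
    · exact hmono y hy x hx
  rw [crossStat, crossStat]
  symm
  apply Finset.card_bij (fun a _ => (f a.1, f a.2))
  · intro ⟨x, y⟩ ha
    simp only [Finset.mem_filter, Finset.mem_product] at ha ⊢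
    exact ⟨⟨Finset.mem_image_of_mem f ha.1.1, Finset.mem_image_of_mem f ha.1.2⟩,
      (key x (hB ha.1.1) y (hC ha.1.2)).mpr ha.2⟩
  · intro ⟨x, y⟩ ha ⟨x', y'⟩ ha' heq
    simp only [Finset.mem_filter, Finset.mem_product] at ha ha'
    simp only [Prod.mk.injEq] at heq ⊢
    have hinj : ∀ u ∈ S, ∀ v ∈ S, f u = f v → u = v := by
      intro u hu v hv huv
      by_contra hne
      rcases Nat.lt_or_ge u v with h2 | h2
      · exact absurd huv (Nat.ne_of_lt (hmono u hu v hv h2))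
      · rcases Nat.eq_or_lt_of_le h2 with h3 | h3
        · omega
        · exact absurd huv.symm (Nat.ne_of_lt (hmono v hv u hu h3))
    exact ⟨hinj x (hB ha.1.1) x' (hB ha'.1.1) heq.1, hinj y (hC ha.1.2) y' (hC ha'.1.2) heq.2⟩
  · intro ⟨u, v⟩ hb
    simp only [Finset.mem_filter, Finset.mem_product, Finset.mem_image] at hb
    obtain ⟨⟨⟨x, hx, rfl⟩, ⟨y, hy, rfl⟩⟩, huv⟩ := hb
    exact ⟨(x, y), Finset.mem_filter.mpr ⟨Finset.mem_product.mpr ⟨hx, hy⟩,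
      (key x (hB hx) y (hC hy)).mp huv⟩, rfl⟩

/-- stat is invariant under strictly monotone relabelling of all blocks -/
lemma stat_map_image {f : ℕ → ℕ} {S : Finset ℕ} {L : SC} (hL : ∀ B ∈ L, B ⊆ S)
    (hmono : ∀ x ∈ S, ∀ y ∈ S, x < y → f x < f y) :
    stat (L.map (Finset.image f)) = stat L := by
  induction L with
  | nil => rfl
  | cons B L ih =>
    have hg : ground L ⊆ S := by
      intro x hx
      obtain ⟨C, hC, hxC⟩ := mem_ground.mp hx
      exact hL C (List.mem_cons_of_mem _ hC) hxC
    simp only [List.map_cons, stat, ground_map_image]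
    rw [crossStat_image (hL B (List.mem_cons_self)) hg hmono,
      ih fun C hC => hL C (List.mem_cons_of_mem _ hC)]

lemma stat_append {L1 L2 : SC} (h : Disjoint (ground L1) (ground L2)) :
    stat (L1 ++ L2) = stat L1 + (L1.map fun B => crossStat B (ground L2)).sum + stat L2 := by
  induction L1 with
  | nil => simp [stat]
  | cons B L ih =>
    have hd : Disjoint (ground L) (ground L2) :=
      Finset.disjoint_of_subset_left (by rw [ground_cons]; exact Finset.subset_union_right) h
    have hdB : Disjoint (ground L) (ground L2) := hd
    simp only [List.cons_append, stat, List.map_cons, List.sum_cons]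
    rw [ground_append, crossStat_union_right hd, ih hd]
    ring

lemma sum_crossStat {L : SC} {C : Finset ℕ} (h : L.Pairwise Disjoint) :
    (L.map fun B => crossStat B C).sum = crossStat (ground L) C := by
  induction L with
  | nil => simp [ground, crossStat]
  | cons B L ih =>
    have hd : Disjoint B (ground L) := disjoint_ground_of_forall (List.pairwise_cons.mp h).1
    simp only [List.map_cons, List.sum_cons, ground_cons]
    rw [crossStat_union_left hd, ih (List.pairwise_cons.mp h).2]

lemma stat_le {L : SC} : stat L ≤ (L.map Finset.card).sum * (ground L).card := by
  induction L with
  | nil => simp [stat]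
  | cons B L ih =>
    simp only [stat, List.map_cons, List.sum_cons]
    have h1 : crossStat B (ground L) ≤ B.card * (ground (B :: L)).card := by
      calc crossStat B (ground L) ≤ B.card * (ground L).card := crossStat_le
      _ ≤ B.card * (ground (B :: L)).card := by
          apply Nat.mul_le_mul_left
          apply Finset.card_le_card
          rw [ground_cons]; exact Finset.subset_union_right
    have h2 : stat L ≤ (L.map Finset.card).sum * (ground (B :: L)).card := by
      calc stat L ≤ (L.map Finset.card).sum * (ground L).card := ih
      _ ≤ _ := by
          apply Nat.mul_le_mul_left
          apply Finset.card_le_card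
          rw [ground_cons]; exact Finset.subset_union_right
    calc crossStat B (ground L) + stat L
        ≤ B.card * (ground (B :: L)).card + (L.map Finset.card).sum * (ground (B :: L)).card :=
          Nat.add_le_add h1 h2
    _ = _ := by ring

lemma sum_card_of_pairwise {L : SC} (h : L.Pairwise Disjoint) :
    (L.map Finset.card).sum = (ground L).card := by
  induction L with
  | nil => simp [ground]
  | cons B L ih =>
    have hd : Disjoint B (ground L) := disjoint_ground_of_forall (List.pairwise_cons.mp h).1
    simp only [List.map_cons, List.sum_cons, ground_cons]
    rw [Finset.card_union_of_disjoint hd, ih (List.pairwise_cons.mp h).2]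

lemma stat_le_sq {n : ℕ} {L : SC} (h : IsSetComp n L) : stat L ≤ n * n := by
  have := stat_le (L := L)
  rw [sum_card_of_pairwise h.2.1, h.2.2, Nat.card_Icc] at this
  simpa using this

end Stat

-- Stage C: relabelling facts, hatB expansion, the filtration Hi, structure lemma
section HatB

lemma disjoint_image_of_injOn {f : ℕ → ℕ} {S B C : Finset ℕ} (hB : B ⊆ S) (hC : C ⊆ S)
    (hinj : Set.InjOn f S) (h : Disjoint B C) : Disjoint (B.image f) (C.image f) := by
  rw [Finset.disjoint_left]
  intro z hz hz'
  obtain ⟨x, hx, rfl⟩ := Finset.mem_image.mp hz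
  obtain ⟨y, hy, hxy⟩ := Finset.mem_image.mp hz'
  have : y = x := hinj (hC hy) (hB hx) hxy
  subst this
  exact (Finset.disjoint_left.mp h) hx hy

lemma relabelSC_facts {p : ℕ} {P : SC} (hP : IsSetComp p P) {A : Finset ℕ} (hA : A.card = p) :
    (∀ B ∈ relabelSC (Finset.Icc 1 p) A P, B.Nonempty) ∧
    (relabelSC (Finset.Icc 1 p) A P).Pairwise Disjoint ∧
    ground (relabelSC (Finset.Icc 1 p) A P) = A ∧
    stat (relabelSC (Finset.Icc 1 p) A P) = stat P := by
  have hsub : ∀ B ∈ P, B ⊆ Finset.Icc 1 p := by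
    intro B hB
    rw [← hP.2.2]
    exact block_subset_ground hB
  have hmono : ∀ x ∈ Finset.Icc 1 p, ∀ y ∈ Finset.Icc 1 p, x < y →
      relabelFun (Finset.Icc 1 p) A x < relabelFun (Finset.Icc 1 p) A y :=
    fun x hx y hy hxy => relabelFun_strictMono hx hy hA hxy
  refine ⟨?_, ?_, ?_, ?_⟩
  · intro B hB
    rw [relabelSC] at hB
    obtain ⟨C, hC, rfl⟩ := List.mem_map.mp hB
    exact (hP.1 C hC).image _
  · rw [relabelSC, List.pairwise_map]
    apply hP.2.1.imp_of_mem
    intro B C hB hC hd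
    exact disjoint_image_of_injOn (hsub B hB) (hsub C hC) (relabelFun_injOn hA) hd
  · rw [relabelSC, ground_map_image, hP.2.2, relabelFun_image hA]
  · exact stat_map_image hsub hmono

/-- the summand of `hatB` indexed by `A` -/
def hTerm (p q : ℕ) (P Q : SC) (A : Finset ℕ) : SC :=
  relabelSC (Finset.Icc 1 p) A P ++
    relabelSC (Finset.Icc 1 q) ((Finset.Icc 1 (p + q)) \ A) Q

lemma hTerm_facts {p q : ℕ} {P Q : SC} (hP : IsSetComp p P) (hQ : IsSetComp q Q)
    {A : Finset ℕ} (hA : A ⊆ Finset.Icc 1 (p + q)) (hcard : A.card = p) :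
    IsSetComp (p + q) (hTerm p q P Q A) ∧
    stat (hTerm p q P Q A) = stat P + stat Q + crossStat A ((Finset.Icc 1 (p + q)) \ A) := by
  set Bc := (Finset.Icc 1 (p + q)) \ A with hBc
  have hBccard : Bc.card = q := by
    rw [hBc, Finset.card_sdiff_of_subset hA, Nat.card_Icc, hcard]; omega
  obtain ⟨hne1, hpw1, hg1, hs1⟩ := relabelSC_facts hP hcard
  obtain ⟨hne2, hpw2, hg2, hs2⟩ := relabelSC_facts hQ hBccard
  have hdisj : Disjoint A Bc := Finset.disjoint_sdiff
  set P' := relabelSC (Finset.Icc 1 p) A P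
  set Q' := relabelSC (Finset.Icc 1 q) Bc Q
  have hgd : Disjoint (ground P') (ground Q') := by rw [hg1, hg2]; exact hdisj
  constructor
  · refine ⟨?_, ?_, ?_⟩
    · intro B hB
      rcases List.mem_append.mp hB with h | h
      · exact hne1 B h
      · exact hne2 B h
    · show List.Pairwise Disjoint (P' ++ Q')
      rw [List.pairwise_append]
      refine ⟨hpw1, hpw2, ?_⟩
      intro B hB C hC
      apply Finset.disjoint_of_subset_left (hg1 ▸ block_subset_ground hB)
      apply Finset.disjoint_of_subset_right (hg2 ▸ block_subset_ground hC)
      exact hdisj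
    · show ground (P' ++ Q') = Finset.Icc 1 (p + q)
      rw [ground_append, hg1, hg2, hBc, Finset.union_sdiff_of_subset hA]
  · rw [hTerm, stat_append hgd, hs1, hs2, hg2]
    have : (P'.map fun B => crossStat B Bc).sum = crossStat (ground P') Bc :=
      sum_crossStat hpw1
    rw [this, hg1]
    ring

lemma sdiff_Icc (p q : ℕ) :
    (Finset.Icc 1 (p + q)) \ (Finset.Icc 1 p) = Finset.Icc (p + 1) (p + q) := by
  ext x
  simp only [Finset.mem_sdiff, Finset.mem_Icc]
  omega

lemma hTerm_initial {p q : ℕ} {P Q : SC} (hP : IsSetComp p P) (hQ : IsSetComp q Q) :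
    hTerm p q P Q (Finset.Icc 1 p) = barMul P Q := by
  rw [hTerm, barMul, maxG_of_isSetComp hP, sdiff_Icc]
  congr 1
  · rw [relabelSC]
    have : ∀ B ∈ P, Finset.image (relabelFun (Finset.Icc 1 p) (Finset.Icc 1 p)) B = B := by
      intro B hB
      have hsub : B ⊆ Finset.Icc 1 p := hP.2.2 ▸ block_subset_ground hB
      conv_rhs => rw [← Finset.image_id (s := B)]
      exact Finset.image_congr fun x hx => relabelFun_self (hsub hx)
    rw [List.map_congr_left this]
    simp
  · rw [relabelSC, shiftSC]
    apply List.map_congr_left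
    intro B hB
    have hsub : B ⊆ Finset.Icc 1 q := hQ.2.2 ▸ block_subset_ground hB
    apply Finset.image_congr
    intro x hx
    exact relabelFun_shift (hsub hx)

lemma crossStat_initial_zero (p q : ℕ) :
    crossStat (Finset.Icc 1 p) (Finset.Icc (p + 1) (p + q)) = 0 := by
  apply crossStat_eq_zero
  intro x hx y hy
  rw [Finset.mem_Icc] at hx hy
  omega

lemma crossStat_pos_of_ne {p q : ℕ} {A : Finset ℕ} (hA : A ⊆ Finset.Icc 1 (p + q))
    (hcard : A.card = p) (hne : A ≠ Finset.Icc 1 p) :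
    0 < crossStat A ((Finset.Icc 1 (p + q)) \ A) := by
  have hIcc : (Finset.Icc 1 p).card = p := by rw [Nat.card_Icc]; omega
  have ha : ∃ a ∈ A, p < a := by
    by_contra hcon
    push_neg at hcon
    have hsub : A ⊆ Finset.Icc 1 p := by
      intro a haA
      have := hA haA
      rw [Finset.mem_Icc] at this ⊢
      exact ⟨this.1, hcon a haA⟩
    exact hne (Finset.eq_of_subset_of_card_le hsub (by omega))
  have hb : ∃ b ∈ Finset.Icc 1 p, b ∉ A := by
    by_contra hcon
    push_neg at hcon
    exact hne ((Finset.eq_of_subset_of_card_le hcon (by omega)).symm)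
  obtain ⟨a, haA, hpa⟩ := ha
  obtain ⟨b, hbI, hbA⟩ := hb
  rw [Finset.mem_Icc] at hbI
  apply crossStat_pos haA (y := b) _ (by omega)
  rw [Finset.mem_sdiff, Finset.mem_Icc]
  have := Finset.mem_Icc.mp (hA haA)
  exact ⟨⟨hbI.1, by omega⟩, hbA⟩

/-- the filtration: span of set compositions of `[n]` with statistic `> s` -/
noncomputable def Hi (n s : ℕ) : Submodule ℤ (FM ℤ) :=
  Submodule.span ℤ {f | ∃ K, IsSetComp n K ∧ s < stat K ∧ f = Finsupp.single K 1}

lemma Hi_le_supported (n s : ℕ) :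
    Hi n s ≤ Finsupp.supported ℤ ℤ {K | IsSetComp n K ∧ s < stat K} := by
  rw [Hi, Submodule.span_le]
  rintro f ⟨K, h1, h2, rfl⟩
  exact Finsupp.single_mem_supported ℤ 1 ⟨h1, h2⟩

lemma single_mem_Hi {n s : ℕ} {K : SC} (h1 : IsSetComp n K) (h2 : s < stat K) :
    Finsupp.single K (1 : ℤ) ∈ Hi n s :=
  Submodule.subset_span ⟨K, h1, h2, rfl⟩

lemma hatL_single_single (P Q : SC) :
    hatL ℤ (Finsupp.single P 1) (Finsupp.single Q 1) = hatB ℤ P Q := by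
  simp [hatL, Finsupp.lift_apply, Finsupp.sum_single_index]

lemma hatB_eq {p q : ℕ} {P Q : SC} (hP : IsSetComp p P) (hQ : IsSetComp q Q) :
    hatB ℤ P Q =
      ∑ A ∈ (Finset.Icc 1 (p + q)).powerset.filter (fun A => A.card = p),
        Finsupp.single (hTerm p q P Q A) 1 := by
  rw [hatB, maxG_of_isSetComp hP, maxG_of_isSetComp hQ]
  rfl

/-- Key lemma A : expansion of the symmetrized product of two single set compositions. -/
lemma hatB_expand {p q : ℕ} {P Q : SC} (hP : IsSetComp p P) (hQ : IsSetComp q Q) :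
    ∃ e, hatB ℤ P Q = Finsupp.single (barMul P Q) 1 + e ∧
      e ∈ Hi (p + q) (stat P + stat Q) ∧
      IsSetComp (p + q) (barMul P Q) ∧
      stat (barMul P Q) = stat P + stat Q := by
  have hIccmem : Finset.Icc 1 p ∈
      (Finset.Icc 1 (p + q)).powerset.filter (fun A => A.card = p) := by
    rw [Finset.mem_filter, Finset.mem_powerset]
    constructor
    · exact Finset.Icc_subset_Icc_right (by omega)
    · rw [Nat.card_Icc]; omega
  have hIccsub : Finset.Icc 1 p ⊆ Finset.Icc 1 (p + q) :=
    Finset.Icc_subset_Icc_right (by omega)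
  have hIcccard : (Finset.Icc 1 p).card = p := by rw [Nat.card_Icc]; omega
  obtain ⟨hsc0, hst0⟩ := hTerm_facts hP hQ hIccsub hIcccard
  rw [hTerm_initial hP hQ] at hsc0 hst0
  rw [sdiff_Icc, crossStat_initial_zero] at hst0
  refine ⟨∑ A ∈ ((Finset.Icc 1 (p + q)).powerset.filter
      (fun A => A.card = p)).erase (Finset.Icc 1 p), Finsupp.single (hTerm p q P Q A) 1,
    ?_, ?_, hsc0, by omega⟩
  · rw [hatB_eq hP hQ, ← Finset.add_sum_erase _ _ hIccmem, hTerm_initial hP hQ]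
  · apply Submodule.sum_mem
    intro A hA
    have hAne : A ≠ Finset.Icc 1 p := (Finset.mem_erase.mp hA).1
    have hA' := (Finset.mem_erase.mp hA).2
    rw [Finset.mem_filter, Finset.mem_powerset] at hA'
    obtain ⟨hsc, hst⟩ := hTerm_facts hP hQ hA'.1 hA'.2
    apply single_mem_Hi hsc
    have := crossStat_pos_of_ne hA'.1 hA'.2 hAne
    omega

/-- Key lemma B : multiplying by a single on the left respects the filtration. -/
lemma hatL_single_Hi {p q s : ℕ} {P : SC} (hP : IsSetComp p P) {e : FM ℤ}
    (he : e ∈ Hi q s) : hatL ℤ (Finsupp.single P 1) e ∈ Hi (p + q) (stat P + s) := by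
  have : Hi q s ≤ (Hi (p + q) (stat P + s)).comap (hatL ℤ (Finsupp.single P 1)) := by
    rw [Hi, Submodule.span_le]
    rintro f ⟨K, h1, h2, rfl⟩
    simp only [SetLike.mem_coe, Submodule.mem_comap]
    rw [hatL_single_single, hatB_eq hP h1]
    apply Submodule.sum_mem
    intro A hA
    rw [Finset.mem_filter, Finset.mem_powerset] at hA
    obtain ⟨hsc, hst⟩ := hTerm_facts hP h1 hA.1 hA.2
    apply single_mem_Hi hsc
    omega
  exact this he

/-- the restricted product of a list of compositions -/
def barProd (F : List SC) : SC := F.foldr barMul []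

/-- Structure lemma : `hatProdList F` is the single on `barProd F` plus terms of
higher statistic. -/
lemma hatProdList_expand : ∀ F : List SC, (∀ Q ∈ F, ∃ m, IsSetComp m Q) →
    ∃ n e, IsSetComp n (barProd F) ∧
      hatProdList F = Finsupp.single (barProd F) 1 + e ∧ e ∈ Hi n (stat (barProd F)) := by
  intro F
  induction F with
  | nil =>
    intro _
    exact ⟨0, 0, isSetComp_nil, by simp [hatProdList, barProd], Submodule.zero_mem _⟩
  | cons P F ih =>
    intro hF
    obtain ⟨m, hm⟩ := hF P (List.mem_cons_self)
    obtain ⟨n', e', hsc', heq', he'⟩ := ih fun Q hQ => hF Q (List.mem_cons_of_mem _ hQ)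
    obtain ⟨e₁, heq₁, he₁, hsc₁, hst₁⟩ := hatB_expand hm hsc'
    refine ⟨m + n', e₁ + hatL ℤ (Finsupp.single P 1) e', ?_, ?_, ?_⟩
    · exact hsc₁
    · have : hatProdList (P :: F) = hatL ℤ (Finsupp.single P 1) (hatProdList F) := rfl
      rw [this, heq', map_add, hatL_single_single, heq₁]
      have hbp : barProd (P :: F) = barMul P (barProd F) := rfl
      rw [hbp]
      abel
    · have hbp : barProd (P :: F) = barMul P (barProd F) := rfl
      rw [hbp, hst₁]
      exact Submodule.add_mem _ he₁ (hatL_single_Hi hm he')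

end HatB

-- Stage D: factorization into reduced compositions, existence and uniqueness
section Factor

lemma reduced_ne_nil {m : ℕ} {P : SC} (h : Reduced m P) : P ≠ [] := by
  intro hP
  have h1 : (1 : ℕ) ∈ Finset.Icc 1 m := Finset.mem_Icc.mpr ⟨le_refl 1, h.2.1⟩
  rw [← h.1.2.2, hP] at h1
  simp [ground] at h1

lemma ground_take_subset (R : SC) (k : ℕ) : ground (R.take k) ⊆ ground R := by
  intro x hx
  obtain ⟨B, hB, hxB⟩ := mem_ground.mp hx
  exact mem_ground.mpr ⟨B, List.mem_of_mem_take hB, hxB⟩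

lemma disjoint_take_drop {R : SC} (h : R.Pairwise Disjoint) (k : ℕ) :
    Disjoint (ground (R.take k)) (ground (R.drop k)) := by
  apply disjoint_ground_ground
  intro B hB C hC
  have h2 : List.Pairwise Disjoint (R.take k ++ R.drop k) := by
    rw [List.take_append_drop]; exact h
  exact (List.pairwise_append.mp h2).2.2 B hB C hC

/-- no prefix of a reduced composition has an initial interval as ground set -/
lemma no_initial_prefix {m : ℕ} {P : SC} (h : Reduced m P) {k : ℕ} (hk0 : 0 < k)
    (hkl : k < P.length) (j : ℕ) : ground (P.take k) ≠ Finset.Icc 1 j := by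
  rcases Nat.lt_or_ge j m with hj | hj
  · exact h.2.2 k j hk0 hkl hj
  · intro heq
    -- the drop part is nonempty and lives in `Icc 1 m ⊆ Icc 1 j`, but is disjoint
    -- from the ground of the prefix, which would be all of `Icc 1 j`
    have hdrop : P.drop k ≠ [] := by
      intro hd
      have := (List.length_drop : (P.drop k).length = P.length - k)
      rw [hd] at this
      simp at this
      omega
    obtain ⟨B, hB⟩ := List.exists_mem_of_ne_nil _ hdrop
    obtain ⟨x, hx⟩ := h.1.1 B (List.mem_of_mem_drop hB)
    have hxg : x ∈ ground (P.drop k) := mem_ground.mpr ⟨B, hB, hx⟩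
    have hxm : x ∈ Finset.Icc 1 m := by
      rw [← h.1.2.2]
      exact mem_ground.mpr ⟨B, List.mem_of_mem_drop hB, hx⟩
    have hxj : x ∈ Finset.Icc 1 j := by
      rw [Finset.mem_Icc] at hxm ⊢
      omega
    rw [← heq] at hxj
    exact (Finset.disjoint_left.mp (disjoint_take_drop h.1.2.1 k)) hxj hxg

lemma shiftSC_injective (m : ℕ) : Function.Injective (shiftSC m) := by
  intro X Y h
  rw [shiftSC, shiftSC] at h
  have hinj : Function.Injective (Finset.image (· + m)) :=
    Finset.image_injective (add_left_injective m)
  exact List.map_injective_iff.mpr hinj h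

lemma barProd_cons (P : SC) (F : List SC) : barProd (P :: F) = barMul P (barProd F) := rfl

lemma barProd_isSetComp {F : List SC} (hF : ∀ Q ∈ F, ∃ m, IsSetComp m Q) :
    ∃ n, IsSetComp n (barProd F) := by
  obtain ⟨n, e, hsc, -, -⟩ := hatProdList_expand F hF
  exact ⟨n, hsc⟩

/-- Existence of the factorization into reduced compositions. -/
lemma factor_exists : ∀ n : ℕ, ∀ R : SC, IsSetComp n R →
    ∃ F : List SC, (∀ Q ∈ F, ∃ m, Reduced m Q) ∧ barProd F = R := by
  intro n
  induction n using Nat.strong_induction_on with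
  | _ n ih =>
    intro R hR
    rcases Nat.eq_zero_or_pos n with rfl | hn
    · exact ⟨[], by simp, by rw [isSetComp_zero hR]; rfl⟩
    -- R is non-empty
    have hRne : R ≠ [] := by
      intro h
      have h1 : (1 : ℕ) ∈ Finset.Icc 1 n := Finset.mem_Icc.mpr ⟨le_refl 1, hn⟩
      rw [← hR.2.2, h] at h1
      simp [ground] at h1
    have hRlen : 1 ≤ R.length := by
      cases R with
      | nil => exact absurd rfl hRne
      | cons B L => simp
    -- the minimal initial-interval prefix
    have hPa : ∃ a, 1 ≤ a ∧ ground (R.take a) = Finset.Icc 1 ((ground (R.take a)).card) := by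
      refine ⟨R.length, hRlen, ?_⟩
      rw [List.take_length, hR.2.2, Nat.card_Icc]
      congr 1 <;> omega
    classical
    set a₀ := Nat.find hPa with ha₀def
    obtain ⟨ha₀1, ha₀g⟩ := Nat.find_spec hPa
    have ha₀len : a₀ ≤ R.length := Nat.find_min' hPa ⟨hRlen, by
      rw [List.take_length, hR.2.2, Nat.card_Icc]; congr 1 <;> omega⟩
    set m₁ := (ground (R.take a₀)).card with hm₁def
    set P₁ := R.take a₀ with hP₁def
    set D := R.drop a₀ with hDdef
    have hP₁sub : ∀ B ∈ P₁, B ∈ R := fun B hB => List.mem_of_mem_take hB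
    have hscP₁ : IsSetComp m₁ P₁ := by
      refine ⟨fun B hB => hR.1 B (hP₁sub B hB), hR.2.1.sublist (List.take_sublist _ _), ha₀g⟩
    have hP₁len : P₁.length = a₀ := by
      rw [hP₁def, List.length_take]
      omega
    have hP₁ne : P₁ ≠ [] := by
      intro h
      rw [h] at hP₁len
      simp at hP₁len
      omega
    have hm₁pos : 0 < m₁ := by
      obtain ⟨B, hB⟩ := List.exists_mem_of_ne_nil _ hP₁ne
      obtain ⟨x, hx⟩ := hscP₁.1 B hB
      have : x ∈ ground P₁ := mem_ground.mpr ⟨B, hB, hx⟩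
      rw [hscP₁.2.2, Finset.mem_Icc] at this
      omega
    have hm₁n : m₁ ≤ n := by
      have : Finset.Icc 1 m₁ ⊆ Finset.Icc 1 n := by
        rw [← hscP₁.2.2, ← hR.2.2]
        exact ground_take_subset R a₀
      have := this (Finset.mem_Icc.mpr ⟨hm₁pos, le_refl m₁⟩)
      exact (Finset.mem_Icc.mp this).2
    have hred : Reduced m₁ P₁ := by
      refine ⟨hscP₁, hm₁pos, ?_⟩
      intro a m ha hal hm heq
      have haa₀ : a < a₀ := by rwa [hP₁len] at hal
      have htake : P₁.take a = R.take a := by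
        rw [hP₁def, List.take_take]
        congr 1
        omega
      apply Nat.find_min hPa haa₀
      rw [← htake]
      refine ⟨ha, ?_⟩
      rw [heq, Nat.card_Icc]
      congr 1 <;> omega
    -- the ground of the drop part
    have hgd : Disjoint (ground P₁) (ground D) := disjoint_take_drop hR.2.1 a₀
    have hunion : ground P₁ ∪ ground D = Finset.Icc 1 n := by
      rw [← ground_append, List.take_append_drop, hR.2.2]
    have hgD : ground D = Finset.Icc (m₁ + 1) n := by
      ext x
      constructor
      · intro hx
        have hxn : x ∈ Finset.Icc 1 n := by
          rw [← hunion]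
          exact Finset.mem_union_right _ hx
        have hxm : x ∉ Finset.Icc 1 m₁ := by
          rw [← hscP₁.2.2]
          exact Finset.disjoint_right.mp hgd hx
        rw [Finset.mem_Icc] at hxn ⊢
        rw [Finset.mem_Icc] at hxm
        omega
      · intro hx
        rw [Finset.mem_Icc] at hx
        have hxn : x ∈ ground P₁ ∪ ground D := by
          rw [hunion, Finset.mem_Icc]
          omega
        rcases Finset.mem_union.mp hxn with h | h
        · exfalso
          rw [hscP₁.2.2, Finset.mem_Icc] at h
          omega
        · exact h
    -- the unshifted drop part
    set D' := D.map (Finset.image (· - m₁)) with hD'def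
    have hDsub : ∀ B ∈ D, B ⊆ Finset.Icc (m₁ + 1) n := by
      intro B hB
      rw [← hgD]
      exact block_subset_ground hB
    have hscD' : IsSetComp (n - m₁) D' := by
      refine ⟨?_, ?_, ?_⟩
      · intro B hB
        obtain ⟨C, hC, rfl⟩ := List.mem_map.mp hB
        exact (hR.1 C (List.mem_of_mem_drop hC)).image _
      · rw [hD'def, List.pairwise_map]
        apply (hR.2.1.sublist (List.drop_sublist _ _)).imp_of_mem
        intro B C hB hC hd
        apply disjoint_image_of_injOn (hDsub B hB) (hDsub C hC) _ hd
        intro x hx y hy hxy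
        simp only [Finset.coe_Icc, Set.mem_Icc] at hx hy
        have hxy' : x - m₁ = y - m₁ := hxy
        omega
      · rw [hD'def, ground_map_image, hgD]
        ext y
        simp only [Finset.mem_image, Finset.mem_Icc]
        constructor
        · rintro ⟨x, hx, rfl⟩
          omega
        · intro hy
          exact ⟨y + m₁, by omega, show y + m₁ - m₁ = y by omega⟩
    have hshift : shiftSC m₁ D' = D := by
      rw [shiftSC, hD'def, List.map_map]
      conv_rhs => rw [← List.map_id D]
      apply List.map_congr_left
      intro B hB
      simp only [Function.comp_apply, Finset.image_image, id_eq]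
      conv_rhs => rw [← Finset.image_id (s := B)]
      apply Finset.image_congr
      intro x hx
      have := hDsub B hB hx
      rw [Finset.mem_Icc] at this
      simp only [Function.comp_apply, id_eq]
      omega
    obtain ⟨F', hF'red, hF'eq⟩ := ih (n - m₁) (by omega) D' hscD'
    refine ⟨P₁ :: F', ?_, ?_⟩
    · intro Q hQ
      rcases List.mem_cons.mp hQ with rfl | hQ
      · exact ⟨m₁, hred⟩
      · exact hF'red Q hQ
    · rw [barProd_cons, hF'eq, barMul, maxG_of_isSetComp hscP₁, hshift, hP₁def, hDdef,
        List.take_append_drop]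

/-- one direction of the length comparison in the uniqueness proof -/
lemma barProd_clash {m m' : ℕ} {P P' : SC} {X X' : SC}
    (hP : Reduced m P) (hP' : Reduced m' P')
    (heq : P ++ X = P' ++ X') (hlen : P.length < P'.length) : False := by
  have htake : (P ++ X).take P.length = P := List.take_left
  have htake' : (P' ++ X').take P.length = P'.take P.length := by
    apply List.take_append_of_le_length
    omega
  rw [heq, htake'] at htake
  have hg : ground (P'.take P.length) = Finset.Icc 1 m := by
    rw [htake, hP.1.2.2]
  have hPlen : 0 < P.length := by
    have := reduced_ne_nil hP
    cases P with
    | nil => exact absurd rfl this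
    | cons B L => simp
  exact no_initial_prefix hP' hPlen hlen m hg

/-- Uniqueness of the factorization into reduced compositions. -/
lemma barProd_injective : ∀ F F' : List SC, (∀ Q ∈ F, ∃ m, Reduced m Q) →
    (∀ Q ∈ F', ∃ m, Reduced m Q) → barProd F = barProd F' → F = F' := by
  intro F
  induction F with
  | nil =>
    intro F' _ hF' heq
    cases F' with
    | nil => rfl
    | cons P' G' =>
      exfalso
      obtain ⟨m', hm'⟩ := hF' P' (List.mem_cons_self)
      rw [barProd_cons, barMul] at heq
      have heq' : ([] : SC) = P' ++ shiftSC (maxG P') (barProd G') := heq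
      exact reduced_ne_nil hm' (List.append_eq_nil_iff.mp heq'.symm).1
  | cons P G ihG =>
    intro F' hF hF' heq
    cases F' with
    | nil =>
      exfalso
      obtain ⟨m, hm⟩ := hF P (List.mem_cons_self)
      rw [barProd_cons, barMul] at heq
      have heq' : P ++ shiftSC (maxG P) (barProd G) = ([] : SC) := heq
      exact reduced_ne_nil hm (List.append_eq_nil_iff.mp heq').1
    | cons P' G' =>
      obtain ⟨m, hm⟩ := hF P (List.mem_cons_self)
      obtain ⟨m', hm'⟩ := hF' P' (List.mem_cons_self)
      rw [barProd_cons, barProd_cons, barMul, barMul] at heq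
      have hlen : P.length = P'.length := by
        rcases Nat.lt_trichotomy P.length P'.length with h | h | h
        · exact absurd heq fun he => barProd_clash hm hm' he h
        · exact h
        · exact absurd heq.symm fun he => barProd_clash hm' hm he h
      have hPP' : P = P' := by
        have h1 : (P ++ shiftSC (maxG P) (barProd G)).take P.length = P := List.take_left
        have h2 : (P' ++ shiftSC (maxG P') (barProd G')).take P'.length = P' :=
          List.take_left
        rw [← h1, ← h2, heq, hlen]
      subst hPP'
      have hX : shiftSC (maxG P) (barProd G) = shiftSC (maxG P) (barProd G') :=
        List.append_cancel_left heq
      have hGG' : barProd G = barProd G' := shiftSC_injective _ hX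
      rw [ihG G' (fun Q hQ => hF Q (List.mem_cons_of_mem _ hQ))
        (fun Q hQ => hF' Q (List.mem_cons_of_mem _ hQ)) hGG']

end Factor

-- Stage E: assembly
section Assembly

lemma isSetComp_unique {n n' : ℕ} {K : SC} (h : IsSetComp n K) (h' : IsSetComp n' K) :
    n = n' := by
  rw [← maxG_of_isSetComp h, ← maxG_of_isSetComp h']

lemma red_to_sc {F : List SC} (hF : ∀ Q ∈ F, ∃ m, Reduced m Q) :
    ∀ Q ∈ F, ∃ m, IsSetComp m Q := by
  intro Q hQ
  obtain ⟨m, hm⟩ := hF Q hQ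
  exact ⟨m, hm.1⟩

/-- every single set composition lies in the span of the products of reduced families -/
lemma single_mem_span_aux : ∀ k n : ℕ, ∀ K : SC, IsSetComp n K → n * n + 1 - stat K ≤ k →
    Finsupp.single K (1 : ℤ) ∈
      Submodule.span ℤ (Set.range fun F : RedSeq => hatProdList F.1) := by
  intro k
  induction k with
  | zero =>
    intro n K hK hk
    exfalso
    have := stat_le_sq hK
    omega
  | succ k ih =>
    intro n K hK hk
    obtain ⟨F, hFred, hFeq⟩ := factor_exists n K hK
    obtain ⟨n₀, e, hsc₀, heq, he⟩ := hatProdList_expand F (red_to_sc hFred)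
    rw [hFeq] at hsc₀ heq he
    have hn₀ : n₀ = n := isSetComp_unique hsc₀ hK
    subst hn₀
    have hstat : stat K ≤ n₀ * n₀ := stat_le_sq hK
    have hprod : hatProdList F ∈
        Submodule.span ℤ (Set.range fun F : RedSeq => hatProdList F.1) :=
      Submodule.subset_span ⟨⟨F, hFred⟩, rfl⟩
    have hesp : e ∈ Submodule.span ℤ (Set.range fun F : RedSeq => hatProdList F.1) := by
      have hHi : Hi n₀ (stat K) ≤
          Submodule.span ℤ (Set.range fun F : RedSeq => hatProdList F.1) := by
        rw [Hi, Submodule.span_le]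
        rintro f ⟨K', h1, h2, rfl⟩
        exact ih n₀ K' h1 (by omega)
      exact hHi he
    have : Finsupp.single K (1 : ℤ) = hatProdList F - e := by
      rw [heq]; abel
    rw [this]
    exact Submodule.sub_mem _ hprod hesp

lemma Hi_le_Tspan (n s : ℕ) : Hi n s ≤ Tspan ℤ := by
  rw [Hi, Submodule.span_le]
  rintro f ⟨K, h1, h2, rfl⟩
  exact Submodule.subset_span ⟨n, K, h1, rfl⟩

theorem hat_free_algebra' :
    LinearIndependent ℤ (fun F : RedSeq => hatProdList F.1) ∧
    Submodule.span ℤ (Set.range fun F : RedSeq => hatProdList F.1) = Tspan ℤ := by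
  constructor
  · rw [linearIndependent_iff]
    intro l hl
    by_contra hl0
    have hsupp : l.support.Nonempty := Finsupp.support_nonempty_iff.mpr hl0
    obtain ⟨F₀, hF₀mem, hF₀min⟩ :=
      Finset.exists_min_image l.support (fun F : RedSeq => stat (barProd F.1)) hsupp
    set K₀ := barProd F₀.1 with hK₀
    have happ : (Finsupp.linearCombination ℤ (fun F : RedSeq => hatProdList F.1) l) K₀ =
        (0 : FM ℤ) K₀ := by rw [hl]
    rw [Finsupp.linearCombination_apply, Finsupp.sum, Finsupp.finset_sum_apply] at happ
    simp only [Finsupp.coe_zero, Pi.zero_apply] at happ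
    have hterm : ∀ F ∈ l.support, (l F • hatProdList F.1) K₀ =
        if F = F₀ then l F₀ else 0 := by
      intro F hF
      obtain ⟨nF, eF, hscF, heqF, heF⟩ := hatProdList_expand F.1 (red_to_sc F.2)
      have heFK₀ : eF K₀ = 0 := by
        by_contra hne
        have hmem : K₀ ∈ eF.support := Finsupp.mem_support_iff.mpr hne
        have := (Finsupp.mem_supported ℤ eF).mp (Hi_le_supported nF (stat (barProd F.1)) heF)
        have hK₀mem := this hmem
        simp only [Set.mem_setOf_eq] at hK₀mem
        have := hF₀min F hF
        omega
      rw [Finsupp.smul_apply, heqF, Finsupp.add_apply, heFK₀, add_zero]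
      by_cases hFF₀ : F = F₀
      · subst hFF₀
        rw [if_pos rfl, Finsupp.single_eq_same, smul_eq_mul, mul_one]
      · rw [if_neg hFF₀]
        have hne : barProd F.1 ≠ K₀ := by
          intro hbar
          apply hFF₀
          apply Subtype.ext
          exact barProd_injective F.1 F₀.1 F.2 F₀.2 hbar
        rw [Finsupp.single_eq_of_ne' hne, smul_zero]
    rw [Finset.sum_congr rfl hterm, Finset.sum_ite_eq' l.support F₀ (fun _ => l F₀)] at happ
    rw [if_pos hF₀mem] at happ
    exact (Finsupp.mem_support_iff.mp hF₀mem) happ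
  · apply le_antisymm
    · rw [Submodule.span_le]
      rintro f ⟨F, rfl⟩
      obtain ⟨nF, eF, hscF, heqF, heF⟩ := hatProdList_expand F.1 (red_to_sc F.2)
      simp only
      rw [heqF]
      apply Submodule.add_mem
      · exact Submodule.subset_span ⟨nF, barProd F.1, hscF, rfl⟩
      · exact Hi_le_Tspan nF _ heF
    · rw [Tspan, Submodule.span_le]
      rintro f ⟨n, P, hP, rfl⟩
      exact single_mem_span_aux (n * n + 1) n P hP (by omega)

end Assembly

/-- **Theorem.** `(T_•, ∗̂)` is a free associative ℤ-algebra, freely generated by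
the reduced set compositions: the symmetrized products `P⁽¹⁾ ∗̂ ⋯ ∗̂ P⁽ᵐ⁾` over
all finite sequences of reduced set compositions form a ℤ-basis of `T_•`. -/
theorem hat_free_algebra :
    LinearIndependent ℤ (fun F : RedSeq => hatProdList F.1) ∧
    Submodule.span ℤ (Set.range fun F : RedSeq => hatProdList F.1) = Tspan ℤ := by
  exact hat_free_algebra'
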